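/- Let γ be a clan of signature (p,q), and let γ₀ be the clan consisting only of signs obtained from γ by replacing, for each pair (i,j) of γ, the entry in position i by + and the entry in position j by − (leaving all sign entries of γ unchanged). Then γ₀ is a clan of signature (p,q) with D(γ₀) = d_{p,q}, and γ can be obtained from γ₀ by a finite sequence of moves, each of which replaces a pair of opposite signs (in two positions i < j) by a pair of equal numbers in those same positions; consequently γ₀ lies below γ in the preorder on clans of signature (p,q) generated by this move. (γ₀ parametrizes a closed orbit contained in the closure of the orbit parametrized by γ.) -/

import Mathlib

/-- An entry of a clan: a plus sign, a minus sign, or a natural number. -/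
inductive CEntry : Type where
  | plus : CEntry
  | minus : CEntry
  | num : ℕ → CEntry
deriving DecidableEq

/-- Whether an entry is a natural number. -/
def CEntry.isNum : CEntry → Bool
  | .num _ => true
  | _ => false

/-- Whether an entry is a sign (`+` or `−`). -/
def CEntry.isSign : CEntry → Bool
  | .num _ => false
  | _ => true

/-- A clan of signature `(p, q)`: a sequence of `n = p + q` symbols, each `+`, `−`, or a
natural number, such that every natural number occurring in the sequence occurs exactly
twice, and the number of `+` entries plus the number of pairs of equal numbers is `p`. -/
structure Clan (n p q : ℕ) : Type where
  c : Fin n → CEntry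
  total : n = p + q
  twice : ∀ a : ℕ, (Finset.univ.filter fun i => c i = CEntry.num a).card = 0 ∨
      (Finset.univ.filter fun i => c i = CEntry.num a).card = 2
  signature : (Finset.univ.filter fun i => c i = CEntry.plus).card
      + (Finset.univ.filter fun i => (c i).isNum = true).card / 2 = p

namespace Clan

variable {n p q : ℕ}

/-- `(i, j)` is a pair of the clan `γ`: `i < j` and `c i = c j` is a natural number. -/
def IsPair (γ : Clan n p q) (i j : Fin n) : Prop :=
  i < j ∧ γ.c i = γ.c j ∧ (γ.c i).isNum = true

instance (γ : Clan n p q) (i j : Fin n) : Decidable (γ.IsPair i j) := by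
  unfold IsPair; infer_instance

/-- The finset of all pairs of the clan `γ`. -/
def pairs (γ : Clan n p q) : Finset (Fin n × Fin n) :=
  Finset.univ.filter fun x => γ.IsPair x.1 x.2

/-- The contribution `j − i − #{pairs (s,t) of γ with s < i < t < j}` of a pair `(i, j)`
to the dimension of the orbit parametrized by `γ`. -/
def summand (γ : Clan n p q) (x : Fin n × Fin n) : ℕ :=
  (x.2 : ℕ) - (x.1 : ℕ) -
    (γ.pairs.filter fun y => y.1 < x.1 ∧ x.1 < y.2 ∧ y.2 < x.2).card

/-- `d_{p,q} = (p(p−1) + q(q−1))/2`, the dimension of the closed orbits. -/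
def dpq (p q : ℕ) : ℕ := (p * (p - 1) + q * (q - 1)) / 2

/-- The dimension of the `GL_p × GL_q`-orbit on the flag variety parametrized by `γ`. -/
def D (γ : Clan n p q) : ℕ := dpq p q + ∑ x ∈ γ.pairs, γ.summand x

/-- `γ` includes the pattern `(1, +, −, 1)`. -/
def Includes1pm1 (γ : Clan n p q) : Prop :=
  ∃ i k l j : Fin n, i < k ∧ k < l ∧ l < j ∧
    γ.c k = CEntry.plus ∧ γ.c l = CEntry.minus ∧ γ.IsPair i j

/-- `γ` includes the pattern `(1, −, +, 1)`. -/
def Includes1mp1 (γ : Clan n p q) : Prop :=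
  ∃ i k l j : Fin n, i < k ∧ k < l ∧ l < j ∧
    γ.c k = CEntry.minus ∧ γ.c l = CEntry.plus ∧ γ.IsPair i j

/-- `γ` includes the pattern `(1, 2, 1, 2)`. -/
def Includes1212 (γ : Clan n p q) : Prop :=
  ∃ i s j t : Fin n, i < s ∧ s < j ∧ j < t ∧
    γ.IsPair i j ∧ γ.IsPair s t ∧ γ.c i ≠ γ.c s

/-- `γ` includes the pattern `(1, +, 2, 2, 1)`. -/
def Includes1p221 (γ : Clan n p q) : Prop :=
  ∃ i k s t j : Fin n, i < k ∧ k < s ∧ s < t ∧ t < j ∧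
    γ.c k = CEntry.plus ∧ γ.IsPair i j ∧ γ.IsPair s t ∧ γ.c i ≠ γ.c s

/-- `γ` includes the pattern `(1, −, 2, 2, 1)`. -/
def Includes1m221 (γ : Clan n p q) : Prop :=
  ∃ i k s t j : Fin n, i < k ∧ k < s ∧ s < t ∧ t < j ∧
    γ.c k = CEntry.minus ∧ γ.IsPair i j ∧ γ.IsPair s t ∧ γ.c i ≠ γ.c s

/-- `γ` includes the pattern `(1, 2, 2, +, 1)`. -/
def Includes122p1 (γ : Clan n p q) : Prop :=
  ∃ i s t k j : Fin n, i < s ∧ s < t ∧ t < k ∧ k < j ∧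
    γ.c k = CEntry.plus ∧ γ.IsPair i j ∧ γ.IsPair s t ∧ γ.c i ≠ γ.c s

/-- `γ` includes the pattern `(1, 2, 2, −, 1)`. -/
def Includes122m1 (γ : Clan n p q) : Prop :=
  ∃ i s t k j : Fin n, i < s ∧ s < t ∧ t < k ∧ k < j ∧
    γ.c k = CEntry.minus ∧ γ.IsPair i j ∧ γ.IsPair s t ∧ γ.c i ≠ γ.c s

/-- `γ` avoids the seven patterns `(1,+,−,1)`, `(1,−,+,1)`, `(1,2,1,2)`, `(1,+,2,2,1)`,
`(1,−,2,2,1)`, `(1,2,2,+,1)`, `(1,2,2,−,1)`. -/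
def AvoidsSeven (γ : Clan n p q) : Prop :=
  ¬ γ.Includes1pm1 ∧ ¬ γ.Includes1mp1 ∧ ¬ γ.Includes1212 ∧
    ¬ γ.Includes1p221 ∧ ¬ γ.Includes1m221 ∧ ¬ γ.Includes122p1 ∧ ¬ γ.Includes122m1

end Clan

/-- The move replacing a pair of opposite signs of `γ` in positions `i < j` by a pair of
equal numbers not occurring in `γ`, yielding `γ'`. -/
def ReplaceMove {n p q : ℕ} (γ γ' : Clan n p q) : Prop :=
  ∃ i j : Fin n, i < j ∧
    ((γ.c i = CEntry.plus ∧ γ.c j = CEntry.minus) ∨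
      (γ.c i = CEntry.minus ∧ γ.c j = CEntry.plus)) ∧
    (∃ a : ℕ, (∀ k, γ.c k ≠ CEntry.num a) ∧
      γ'.c i = CEntry.num a ∧ γ'.c j = CEntry.num a) ∧
    ∀ k, k ≠ i → k ≠ j → γ'.c k = γ.c k

private lemma Clan.D_of_no_num {n p q : ℕ} (γ : Clan n p q)
    (h : ∀ k, (γ.c k).isNum = false) : γ.D = Clan.dpq p q := by
  have hp : γ.pairs = ∅ := by
    apply Finset.filter_eq_empty_iff.mpr
    intro x _ hx
    have := hx.2.2
    rw [h x.1] at this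
    exact Bool.false_ne_true this
  simp [Clan.D, hp]

/-- Replacing each pair `(i, j)` of `γ` by `+` in position `i` and `−` in
position `j` yields a clan `γ₀` of signature `(p, q)` consisting only of signs, with
`D(γ₀) = d_{p,q}`, from which `γ` is obtained by a finite sequence of moves each
replacing a pair of opposite signs by a pair of equal numbers. -/
theorem closed_orbit_below {n p q : ℕ} (γ : Clan n p q) :
    ∃ γ₀ : Clan n p q,
      (∀ i j : Fin n, γ.IsPair i j → γ₀.c i = CEntry.plus ∧ γ₀.c j = CEntry.minus) ∧
      (∀ k : Fin n, (γ.c k).isSign = true → γ₀.c k = γ.c k) ∧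
      γ₀.D = Clan.dpq p q ∧
      Relation.ReflTransGen ReplaceMove γ₀ γ := by
  suffices h : ∀ m (δ : Clan n p q),
      (Finset.univ.filter fun k => (δ.c k).isNum = true).card = m →
      ∃ γ₀ : Clan n p q,
        (∀ i j : Fin n, δ.IsPair i j → γ₀.c i = CEntry.plus ∧ γ₀.c j = CEntry.minus) ∧
        (∀ k : Fin n, (δ.c k).isSign = true → γ₀.c k = δ.c k) ∧
        γ₀.D = Clan.dpq p q ∧
        Relation.ReflTransGen ReplaceMove γ₀ δ by
    exact h _ γ rfl
  intro m
  induction m using Nat.strong_induction_on with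
  | _ m ih =>
    intro δ hm
    by_cases h0 : ∀ k, (δ.c k).isNum = false
    · refine ⟨δ, ?_, fun k _ => rfl, Clan.D_of_no_num δ h0, .refl⟩
      intro i j hp
      have := hp.2.2
      rw [h0 i] at this
      exact absurd this (by simp)
    · push_neg at h0
      obtain ⟨k₀, hk₀⟩ := h0
      simp only [ne_eq, Bool.not_eq_false] at hk₀
      obtain ⟨a₀, ha₀⟩ : ∃ a, δ.c k₀ = CEntry.num a := by
        rcases he : δ.c k₀ with _ | _ | a
        · rw [he] at hk₀; simp [CEntry.isNum] at hk₀
        · rw [he] at hk₀; simp [CEntry.isNum] at hk₀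
        · exact ⟨a, rfl⟩
      -- the two positions of the number a₀
      have hcard2 : (Finset.univ.filter fun k => δ.c k = CEntry.num a₀).card = 2 := by
        rcases δ.twice a₀ with h | h
        · exfalso
          have : k₀ ∈ Finset.univ.filter fun k => δ.c k = CEntry.num a₀ := by
            simp [ha₀]
          rw [Finset.card_eq_zero] at h
          simp [h] at this
        · exact h
      obtain ⟨x, y, hxy, hs⟩ := Finset.card_eq_two.mp hcard2
      obtain ⟨i, j, hij, hs⟩ : ∃ i j : Fin n, i < j ∧
          (Finset.univ.filter fun k => δ.c k = CEntry.num a₀) = {i, j} := by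
        rcases lt_or_gt_of_ne hxy with h | h
        · exact ⟨x, y, h, hs⟩
        · exact ⟨y, x, h, by rw [hs, Finset.pair_comm]⟩
      have hmem : ∀ k, δ.c k = CEntry.num a₀ ↔ (k = i ∨ k = j) := by
        intro k
        constructor
        · intro hk
          have : k ∈ (Finset.univ.filter fun k => δ.c k = CEntry.num a₀) := by simp [hk]
          rw [hs] at this
          simpa using this
        · intro hk
          have : k ∈ ({i, j} : Finset (Fin n)) := by simpa using hk
          rw [← hs] at this
          simpa using this
      have hci : δ.c i = CEntry.num a₀ := (hmem i).mpr (Or.inl rfl)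
      have hcj : δ.c j = CEntry.num a₀ := (hmem j).mpr (Or.inr rfl)
      set c' : Fin n → CEntry := fun k =>
        if k = i then CEntry.plus else if k = j then CEntry.minus else δ.c k with hc'
      have hc'i : c' i = CEntry.plus := by simp [hc']
      have hc'j : c' j = CEntry.minus := by simp [hc', (ne_of_lt hij).symm]
      have hc'k : ∀ k, k ≠ i → k ≠ j → c' k = δ.c k := by
        intro k h1 h2; simp [hc', h1, h2]
      have hno : ∀ k, c' k ≠ CEntry.num a₀ := by
        intro k
        by_cases h1 : k = i
        · subst h1; rw [hc'i]; simp
        · by_cases h2 : k = j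
          · subst h2; rw [hc'j]; simp
          · rw [hc'k k h1 h2]
            intro hk
            rcases (hmem k).mp hk with h | h <;> [exact h1 h; exact h2 h]
      -- the numbered entries of c'
      have hBnum : (Finset.univ.filter fun k => (c' k).isNum = true)
          = ((Finset.univ.filter fun k => (δ.c k).isNum = true).erase i).erase j := by
        ext k
        simp only [Finset.mem_filter, Finset.mem_univ, true_and, Finset.mem_erase]
        by_cases h1 : k = i
        · subst h1
          rw [hc'i]
          simp [CEntry.isNum, (ne_of_lt hij)]
        · by_cases h2 : k = j
          · subst h2
            rw [hc'j]
            simp [CEntry.isNum]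
          · rw [hc'k k h1 h2]
            simp [h1, h2]
      have hiN : i ∈ Finset.univ.filter fun k => (δ.c k).isNum = true := by
        rw [Finset.mem_filter]; simp [hci, CEntry.isNum]
      have hjN : j ∈ (Finset.univ.filter fun k => (δ.c k).isNum = true).erase i := by
        rw [Finset.mem_erase, Finset.mem_filter]; simp [hcj, CEntry.isNum, (ne_of_lt hij).symm]
      have hBcard : (Finset.univ.filter fun k => (c' k).isNum = true).card = m - 2 := by
        rw [hBnum, Finset.card_erase_of_mem hjN, Finset.card_erase_of_mem hiN, hm]
        omega
      have hm2 : 2 ≤ m := by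
        have hsub : ({i, j} : Finset (Fin n)) ⊆
            Finset.univ.filter fun k => (δ.c k).isNum = true := by
          intro k hk
          rcases Finset.mem_insert.mp hk with h | h
          · subst h; exact hiN
          · rw [Finset.mem_singleton] at h; subst h
            rw [Finset.mem_filter]; simp [hcj, CEntry.isNum]
        have := Finset.card_le_card hsub
        rwa [Finset.card_pair (ne_of_lt hij), hm] at this
      -- twice for c'
      have htwice : ∀ a : ℕ, (Finset.univ.filter fun k => c' k = CEntry.num a).card = 0 ∨
          (Finset.univ.filter fun k => c' k = CEntry.num a).card = 2 := by
        intro a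
        by_cases ha : a = a₀
        · subst ha
          left
          rw [Finset.card_eq_zero]
          apply Finset.filter_eq_empty_iff.mpr
          intro k _
          exact hno k
        · have : (Finset.univ.filter fun k => c' k = CEntry.num a)
              = Finset.univ.filter fun k => δ.c k = CEntry.num a := by
            ext k
            simp only [Finset.mem_filter, Finset.mem_univ, true_and]
            by_cases h1 : k = i
            · subst h1
              rw [hc'i, hci]
              simp [Ne.symm ha]
            · by_cases h2 : k = j
              · subst h2
                rw [hc'j, hcj]
                simp [Ne.symm ha]
              · rw [hc'k k h1 h2]
          rw [this]
          exact δ.twice a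
      -- signature for c'
      have hsig : (Finset.univ.filter fun k => c' k = CEntry.plus).card
          + (Finset.univ.filter fun k => (c' k).isNum = true).card / 2 = p := by
        have hA : (Finset.univ.filter fun k => c' k = CEntry.plus)
            = insert i (Finset.univ.filter fun k => δ.c k = CEntry.plus) := by
          ext k
          simp only [Finset.mem_filter, Finset.mem_univ, true_and, Finset.mem_insert]
          by_cases h1 : k = i
          · subst h1; simp [hc'i]
          · by_cases h2 : k = j
            · subst h2
              rw [hc'j, hcj]
              simp [h1]
            · rw [hc'k k h1 h2]
              simp [h1]
        have hiP : i ∉ Finset.univ.filter fun k => δ.c k = CEntry.plus := by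
          simp [hci]
        rw [hA, Finset.card_insert_of_notMem hiP, hBcard]
        have := δ.signature
        rw [hm] at this
        omega
      let δ' : Clan n p q := ⟨c', δ.total, htwice, hsig⟩
      have hδ'c : ∀ k, δ'.c k = c' k := fun _ => rfl
      obtain ⟨γ₀, h1, h2, h3, h4⟩ := ih (m - 2) (by omega) δ' hBcard
      have hstep : ReplaceMove δ' δ := by
        refine ⟨i, j, hij, Or.inl ⟨hc'i, hc'j⟩, ⟨a₀, hno, hci, hcj⟩, ?_⟩
        intro k hk1 hk2
        exact (hc'k k hk1 hk2).symm
      refine ⟨γ₀, ?_, ?_, h3, h4.tail hstep⟩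
      · -- pairs of δ
        intro i' j' hp
        obtain ⟨hlt, heq, hnum⟩ := hp
        obtain ⟨a, ha⟩ : ∃ a, δ.c i' = CEntry.num a := by
          rcases he : δ.c i' with _ | _ | a
          · rw [he] at hnum; simp [CEntry.isNum] at hnum
          · rw [he] at hnum; simp [CEntry.isNum] at hnum
          · exact ⟨a, rfl⟩
        by_cases haa : a = a₀
        · subst haa
          have hi' : i' = i ∨ i' = j := (hmem i').mp ha
          have hj' : j' = i ∨ j' = j := (hmem j').mp (by rw [← heq]; exact ha)
          have hii' : i' = i ∧ j' = j := by
            rcases hi' with rfl | rfl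
            · rcases hj' with rfl | rfl
              · exact absurd hlt (lt_irrefl _)
              · exact ⟨rfl, rfl⟩
            · rcases hj' with rfl | rfl
              · exact absurd (hij.trans hlt) (lt_irrefl _)
              · exact absurd hlt (lt_irrefl _)
          rw [hii'.1, hii'.2]
          constructor
          · have := h2 i (by rw [hδ'c, hc'i]; rfl)
            rw [this, hδ'c, hc'i]
          · have := h2 j (by rw [hδ'c, hc'j]; rfl)
            rw [this, hδ'c, hc'j]
        · have ha2 : δ.c j' = CEntry.num a := heq ▸ ha
          have hi1 : i' ≠ i := by
            intro h; rw [h, hci] at ha; injection ha with h'; exact haa h'.symm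
          have hi2 : i' ≠ j := by
            intro h; rw [h, hcj] at ha; injection ha with h'; exact haa h'.symm
          have hj1 : j' ≠ i := by
            intro h; rw [h, hci] at ha2; injection ha2 with h'; exact haa h'.symm
          have hj2 : j' ≠ j := by
            intro h; rw [h, hcj] at ha2; injection ha2 with h'; exact haa h'.symm
          apply h1
          refine ⟨hlt, ?_, ?_⟩
          · rw [hδ'c, hδ'c, hc'k i' hi1 hi2, hc'k j' hj1 hj2]; exact heq
          · rw [hδ'c, hc'k i' hi1 hi2]; exact hnum
      · -- sign entries of δ
        intro k hk
        have hk1 : k ≠ i := by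
          intro h; rw [h, hci] at hk; simp [CEntry.isSign] at hk
        have hk2 : k ≠ j := by
          intro h; rw [h, hcj] at hk; simp [CEntry.isSign] at hk
        have := h2 k (by rw [hδ'c, hc'k k hk1 hk2]; exact hk)
        rw [this, hδ'c, hc'k k hk1 hk2]
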